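/- Let K and E be nonempty finite types, let q : K × K → ℝ be nonnegative with Σ_{a,b} q(a,b) = 1, and for each (a,b) let ρ_{a,b} be a positive semidefinite complex matrix indexed by E with trace 1. Set σ := Σ_{a,b} q(a,b)·ρ_{a,b}, ρ_real := Σ_{a,b} q(a,b)·(Δ_a ⊗ Δ_b ⊗ ρ_{a,b}), ρ_ideal := Σ_{a} (1/|K|)·(Δ_a ⊗ Δ_a ⊗ σ), ρ_real^{AE} := Σ_{a,b} q(a,b)·(Δ_a ⊗ ρ_{a,b}), and ρ_ideal^{AE} := Σ_{a} (1/|K|)·(Δ_a ⊗ σ). Then (1/2)·‖ρ_real − ρ_ideal‖₁ ≤ (1/2)·‖ρ_real^{AE} − ρ_ideal^{AE}‖₁ + Σ_{(a,b) : a ≠ b} q(a,b). (This is the key-length-conditioned form of the decomposition of the security parameter into a secrecy part and a correctness part, Proposition 1.) -/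

import Mathlib

open scoped Kronecker ComplexOrder

/-- The trace norm `‖X‖₁ = tr √(Xᴴ X)` of a square complex matrix. -/
noncomputable def traceNorm {n : Type*} [Fintype n] [DecidableEq n] (X : Matrix n n ℂ) : ℝ :=
  (((Matrix.posSemidef_conjTranspose_mul_self X).1.eigenvectorUnitary.1 *
      Matrix.diagonal (((↑) : ℝ → ℂ) ∘ (Real.sqrt ∘ (Matrix.posSemidef_conjTranspose_mul_self X).1.eigenvalues)) *
      (star (Matrix.posSemidef_conjTranspose_mul_self X).1.eigenvectorUnitary : Matrix n n ℂ)).trace).re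

set_option linter.unusedSectionVars false

namespace QKDAux

open Matrix

section Core

variable {n : Type*} [Fintype n] [DecidableEq n]

open scoped MatrixOrder in
noncomputable def msqrt (P : Matrix n n ℂ) : Matrix n n ℂ := CFC.sqrt P

open scoped MatrixOrder in
lemma psd_msqrt {P : Matrix n n ℂ} (_hP : P.PosSemidef) : (msqrt P).PosSemidef :=
  Matrix.nonneg_iff_posSemidef.mp (CFC.sqrt_nonneg P)

open scoped MatrixOrder in
lemma msqrt_mul_self {P : Matrix n n ℂ} (hP : P.PosSemidef) : msqrt P * msqrt P = P :=
  CFC.sqrt_mul_sqrt_self P (Matrix.nonneg_iff_posSemidef.mpr hP)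

open scoped MatrixOrder in
lemma traceNorm_eq_msqrt (X : Matrix n n ℂ) : traceNorm X = (msqrt (Xᴴ * X)).trace.re := by
  have h0 := posSemidef_conjTranspose_mul_self X
  rw [msqrt, CFC.sqrt_eq_cfc, cfc_nnreal_eq_real _ _ (Matrix.nonneg_iff_posSemidef.mpr h0),
    h0.1.cfc_eq]
  simp only [IsHermitian.cfc, Unitary.conjStarAlgAut_apply, traceNorm]
  congr 5
  funext i
  simp [Real.coe_sqrt, max_eq_left (h0.eigenvalues_nonneg i)]

open scoped MatrixOrder in
lemma traceNorm_of_sq {X Y : Matrix n n ℂ} (hY : Y.PosSemidef) (h : Y ^ 2 = Xᴴ * X) :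
    traceNorm X = Y.trace.re := by
  rw [traceNorm_eq_msqrt, ← h, msqrt, CFC.sqrt_sq Y (Matrix.nonneg_iff_posSemidef.mpr hY)]

lemma psd_smul {c : ℂ} (hc : 0 ≤ c) {A : Matrix n n ℂ} (hA : A.PosSemidef) :
    (c • A).PosSemidef := by
  constructor
  · have hcs : star c = c := by
      rw [Complex.star_def, Complex.conj_eq_iff_im]
      exact ((Complex.le_def.mp hc).2).symm
    rw [Matrix.IsHermitian, conjTranspose_smul, hcs, hA.1]
  · exact (hA.smul hc).2

lemma psd_sum {ι : Type*} (s : Finset ι) (f : ι → Matrix n n ℂ)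
    (h : ∀ i ∈ s, (f i).PosSemidef) : (∑ i ∈ s, f i).PosSemidef :=
  Finset.sum_induction f _ (fun _ _ ha hb => ha.add hb) Matrix.PosSemidef.zero h

lemma psd_trace_re_nonneg {A : Matrix n n ℂ} (hA : A.PosSemidef) : 0 ≤ A.trace.re := by
  simpa using (Complex.le_def.mp hA.trace_nonneg).1

noncomputable def conjD (U : Matrix.unitaryGroup n ℂ) (f : n → ℝ) : Matrix n n ℂ :=
  (U : Matrix n n ℂ) * Matrix.diagonal (fun i => (f i : ℂ)) * star (U : Matrix n n ℂ)

lemma conjD_mul (U : Matrix.unitaryGroup n ℂ) (f g : n → ℝ) :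
    conjD U f * conjD U g = conjD U (fun i => f i * g i) := by
  unfold conjD
  have h : star (U : Matrix n n ℂ) * (U : Matrix n n ℂ) = 1 := U.2.1
  have h' : ∀ X : Matrix n n ℂ, star (U : Matrix n n ℂ) * ((U : Matrix n n ℂ) * X) = X := by
    intro X; rw [← Matrix.mul_assoc, h, Matrix.one_mul]
  simp only [Matrix.mul_assoc]
  rw [h', ← Matrix.mul_assoc (Matrix.diagonal _), Matrix.diagonal_mul_diagonal]
  congr 3
  ext i
  push_cast
  ring

lemma conjD_trace (U : Matrix.unitaryGroup n ℂ) (f : n → ℝ) :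
    (conjD U f).trace = ∑ i, (f i : ℂ) := by
  unfold conjD
  rw [Matrix.trace_mul_cycle]
  have h : star (U : Matrix n n ℂ) * (U : Matrix n n ℂ) = 1 := U.2.1
  rw [h, Matrix.one_mul, Matrix.trace_diagonal]

lemma conjD_posSemidef (U : Matrix.unitaryGroup n ℂ) {f : n → ℝ} (hf : ∀ i, 0 ≤ f i) :
    (conjD U f).PosSemidef := by
  have hd : (Matrix.diagonal (fun i => (f i : ℂ))).PosSemidef :=
    Matrix.posSemidef_diagonal_iff.mpr fun i => Complex.zero_le_real.mpr (hf i)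
  have := hd.mul_mul_conjTranspose_same (U : Matrix n n ℂ)
  rwa [← Matrix.star_eq_conjTranspose] at this

lemma conjD_add (U : Matrix.unitaryGroup n ℂ) (f g : n → ℝ) :
    conjD U f + conjD U g = conjD U (fun i => f i + g i) := by
  unfold conjD
  rw [← Matrix.add_mul, ← Matrix.mul_add, Matrix.diagonal_add]
  congr 2
  ext i
  push_cast
  ring

lemma conjD_sub (U : Matrix.unitaryGroup n ℂ) (f g : n → ℝ) :
    conjD U f - conjD U g = conjD U (fun i => f i - g i) := by
  unfold conjD
  rw [← Matrix.sub_mul, ← Matrix.mul_sub, Matrix.diagonal_sub]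
  congr 2
  ext i
  push_cast
  ring

lemma conjD_one (U : Matrix.unitaryGroup n ℂ) : conjD U (fun _ => 1) = 1 := by
  unfold conjD
  have h : (U : Matrix n n ℂ) * star (U : Matrix n n ℂ) = 1 := U.2.2
  simp only [Complex.ofReal_one]
  rw [Matrix.diagonal_one, Matrix.mul_one, h]

lemma conjD_spectral {X : Matrix n n ℂ} (hX : X.IsHermitian) :
    X = conjD hX.eigenvectorUnitary hX.eigenvalues := by
  conv_lhs => rw [hX.spectral_theorem]
  rfl

lemma traceNorm_psd {A : Matrix n n ℂ} (hA : A.PosSemidef) : traceNorm A = A.trace.re := by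
  have h : A ^ 2 = Aᴴ * A := by rw [sq, hA.1]
  exact traceNorm_of_sq hA h

lemma traceNorm_eq_sum_abs {X : Matrix n n ℂ} (hX : X.IsHermitian) :
    traceNorm X = ∑ i, |hX.eigenvalues i| := by
  have hY : (conjD hX.eigenvectorUnitary (fun i => |hX.eigenvalues i|)).PosSemidef :=
    conjD_posSemidef _ fun i => abs_nonneg _
  have h2 : conjD hX.eigenvectorUnitary (fun i => |hX.eigenvalues i|) ^ 2 = Xᴴ * X := by
    rw [sq, conjD_mul]
    have he : (fun i => |hX.eigenvalues i| * |hX.eigenvalues i|)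
        = fun i => hX.eigenvalues i * hX.eigenvalues i :=
      funext fun i => abs_mul_abs_self _
    rw [he, ← conjD_mul, ← conjD_spectral hX, hX.eq]
  rw [traceNorm_of_sq hY h2,
    conjD_trace, Complex.re_sum]
  simp

lemma re_trace_mul_le {S P : Matrix n n ℂ} (hS : (1 - S).PosSemidef) (hP : P.PosSemidef) :
    ((S * P).trace).re ≤ P.trace.re := by
  have h := psd_trace_re_nonneg (hS.conjTranspose_mul_mul_same (msqrt P))
  have hR : (msqrt P)ᴴ = msqrt P := (psd_msqrt hP).1
  have e : ((msqrt P)ᴴ * (1 - S) * msqrt P).trace = P.trace - (S * P).trace := by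
    rw [hR, Matrix.mul_sub, Matrix.mul_one, Matrix.sub_mul, Matrix.trace_sub,
      msqrt_mul_self hP, Matrix.mul_assoc, Matrix.trace_mul_comm (msqrt P),
      Matrix.mul_assoc, msqrt_mul_self hP]
  rw [e, Complex.sub_re] at h
  linarith

lemma traceNorm_le_of_eq_sub {X P Q : Matrix n n ℂ} (hP : P.PosSemidef) (hQ : Q.PosSemidef)
    (h : X = P - Q) : traceNorm X ≤ P.trace.re + Q.trace.re := by
  have hX : X.IsHermitian := by rw [h]; exact hP.1.sub hQ.1
  set U := hX.eigenvectorUnitary with hU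
  set l := hX.eigenvalues with hl
  set s : n → ℝ := fun i => if 0 ≤ l i then 1 else -1 with hs
  have h1m : (1 - conjD U s).PosSemidef := by
    rw [show (1 : Matrix n n ℂ) = conjD U (fun _ => 1) from (conjD_one U).symm, conjD_sub]
    exact conjD_posSemidef _ fun i => by dsimp [s]; split <;> norm_num
  have h1p : (1 - -conjD U s).PosSemidef := by
    rw [sub_neg_eq_add, show (1 : Matrix n n ℂ) = conjD U (fun _ => 1) from (conjD_one U).symm,
      conjD_add]
    exact conjD_posSemidef _ fun i => by dsimp [s]; split <;> norm_num
  have htr : ((conjD U s * X).trace).re = ∑ i, |l i| := by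
    conv_lhs => rw [conjD_spectral hX, ← hU, ← hl, conjD_mul, conjD_trace]
    rw [Complex.re_sum]
    refine Finset.sum_congr rfl fun i _ => ?_
    rw [Complex.ofReal_re]
    dsimp [s]
    rcases le_or_gt 0 (l i) with hli | hli
    · rw [if_pos hli, one_mul, abs_of_nonneg hli]
    · rw [if_neg (not_le.mpr hli), abs_of_neg hli]; ring
  have hsplit : (conjD U s * X).trace = (conjD U s * P).trace - (conjD U s * Q).trace := by
    rw [h, Matrix.mul_sub, Matrix.trace_sub]
  have h1 : ((conjD U s * P).trace).re ≤ P.trace.re := re_trace_mul_le h1m hP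
  have h2 : ((-conjD U s * Q).trace).re ≤ Q.trace.re := re_trace_mul_le h1p hQ
  have h2' : -(((conjD U s * Q).trace).re) ≤ Q.trace.re := by
    rwa [Matrix.neg_mul, Matrix.trace_neg, Complex.neg_re] at h2
  have := traceNorm_eq_sum_abs hX
  rw [← hl] at this
  rw [this, ← htr, hsplit, Complex.sub_re]
  linarith

lemma traceNorm_sub_le {X R : Matrix n n ℂ} (hX : X.IsHermitian) (hR : R.PosSemidef) :
    traceNorm (X - R) ≤ traceNorm X + R.trace.re := by
  set U := hX.eigenvectorUnitary with hU
  set l := hX.eigenvalues with hl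
  have hP : (conjD U (fun i => max (l i) 0)).PosSemidef :=
    conjD_posSemidef _ fun i => le_max_right _ _
  have hQ : (conjD U (fun i => max (-l i) 0)).PosSemidef :=
    conjD_posSemidef _ fun i => le_max_right _ _
  have hPQ : X = conjD U (fun i => max (l i) 0) - conjD U (fun i => max (-l i) 0) := by
    rw [conjD_sub]
    have he : (fun i => max (l i) 0 - max (-l i) 0) = l := by
      funext i
      rcases le_total 0 (l i) with hli | hli
      · rw [max_eq_left hli, max_eq_right (by linarith)]; ring
      · rw [max_eq_right hli, max_eq_left (by linarith)]; ring
    rw [he]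
    exact conjD_spectral hX
  have hXR : X - R = conjD U (fun i => max (l i) 0) - (conjD U (fun i => max (-l i) 0) + R) := by
    rw [hPQ]; abel
  have key := traceNorm_le_of_eq_sub hP (hQ.add hR) hXR
  have htr : (conjD U (fun i => max (l i) 0)).trace.re
      + (conjD U (fun i => max (-l i) 0)).trace.re = traceNorm X := by
    rw [conjD_trace, conjD_trace, Complex.re_sum, Complex.re_sum, traceNorm_eq_sum_abs hX, ← hl,
      ← Finset.sum_add_distrib]
    refine Finset.sum_congr rfl fun i _ => ?_
    rw [Complex.ofReal_re, Complex.ofReal_re]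
    rcases le_total 0 (l i) with hli | hli
    · rw [max_eq_left hli, max_eq_right (by linarith), abs_of_nonneg hli]; ring
    · rw [max_eq_right hli, max_eq_left (by linarith), abs_of_nonpos hli]; ring
  rw [Matrix.trace_add, Complex.add_re] at key
  linarith

end Core

section Block

variable {I F : Type*} [Fintype I] [DecidableEq I] [Fintype F] [DecidableEq F]

lemma stdBasis_conjTranspose (a : I) :
    (Matrix.single a a (1 : ℂ))ᴴ = Matrix.single a a 1 := by
  ext i j
  simp [Matrix.conjTranspose_apply, Matrix.single, apply_ite (star : ℂ → ℂ), and_comm]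

lemma kron_conjTranspose {l m : Type*} (A : Matrix l l ℂ) (B : Matrix m m ℂ) :
    (A ⊗ₖ B)ᴴ = Aᴴ ⊗ₖ Bᴴ := by
  ext i j
  obtain ⟨i1, i2⟩ := i
  obtain ⟨j1, j2⟩ := j
  simp [Matrix.conjTranspose_apply, Matrix.kroneckerMap_apply, star_mul']

lemma kron_sum {ι l l' m m' : Type*} (s : Finset ι) (A : Matrix l l' ℂ)
    (f : ι → Matrix m m' ℂ) : A ⊗ₖ (∑ i ∈ s, f i) = ∑ i ∈ s, A ⊗ₖ f i := by
  ext i j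
  obtain ⟨i1, i2⟩ := i
  obtain ⟨j1, j2⟩ := j
  simp [Matrix.kroneckerMap_apply, Finset.mul_sum, Matrix.sum_apply]

lemma kron_sub {l l' m m' : Type*} (A : Matrix l l' ℂ) (B C : Matrix m m' ℂ) :
    A ⊗ₖ (B - C) = A ⊗ₖ B - A ⊗ₖ C := by
  ext i j
  obtain ⟨i1, i2⟩ := i
  obtain ⟨j1, j2⟩ := j
  simp [Matrix.kroneckerMap_apply, Matrix.sub_apply, mul_sub]

lemma key_mul (A B : I → Matrix F F ℂ) :
    (∑ a, Matrix.single a a (1 : ℂ) ⊗ₖ A a) *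
      (∑ b, Matrix.single b b (1 : ℂ) ⊗ₖ B b)
      = ∑ a, Matrix.single a a (1 : ℂ) ⊗ₖ (A a * B a) := by
  rw [Finset.sum_mul_sum]
  refine Finset.sum_congr rfl fun a _ => ?_
  rw [Finset.sum_eq_single a]
  · rw [← Matrix.mul_kronecker_mul, Matrix.single_mul_single_same, one_mul]
  · intro b _ hb
    rw [← Matrix.mul_kronecker_mul,
      Matrix.single_mul_single_of_ne (h := Ne.symm hb), Matrix.zero_kronecker]
  · simp

lemma kron_std_psd (a : I) {P : Matrix F F ℂ} (hP : P.PosSemidef) :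
    (Matrix.single a a (1 : ℂ) ⊗ₖ P).PosSemidef := by
  have h : Matrix.single a a (1 : ℂ) ⊗ₖ P
      = (Matrix.single a a (1 : ℂ) ⊗ₖ msqrt P)ᴴ *
        (Matrix.single a a (1 : ℂ) ⊗ₖ msqrt P) := by
    rw [kron_conjTranspose, stdBasis_conjTranspose, (psd_msqrt hP).1,
      ← Matrix.mul_kronecker_mul, Matrix.single_mul_single_same, one_mul, msqrt_mul_self hP]
  rw [h]
  exact Matrix.posSemidef_conjTranspose_mul_self _

lemma trace_std (a : I) : (Matrix.single a a (1 : ℂ)).trace = 1 := by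
  simp [Matrix.trace, Matrix.diag, Matrix.single]

lemma traceNorm_blockDiag (M : I → Matrix F F ℂ) :
    traceNorm (∑ a, Matrix.single a a (1 : ℂ) ⊗ₖ M a) = ∑ a, traceNorm (M a) := by
  set B := ∑ a, Matrix.single a a (1 : ℂ) ⊗ₖ M a with hB
  have hBc : Bᴴ = ∑ a, Matrix.single a a (1 : ℂ) ⊗ₖ (M a)ᴴ := by
    rw [hB, Matrix.conjTranspose_sum]
    exact Finset.sum_congr rfl fun a _ => by rw [kron_conjTranspose, stdBasis_conjTranspose]
  have hBB : Bᴴ * B = ∑ a, Matrix.single a a (1 : ℂ) ⊗ₖ ((M a)ᴴ * M a) := by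
    rw [hBc, hB, key_mul]
  set Y := ∑ a, Matrix.single a a (1 : ℂ) ⊗ₖ
    msqrt ((M a)ᴴ * M a) with hY
  have hYpsd : Y.PosSemidef :=
    psd_sum _ _ fun a _ =>
      kron_std_psd a (psd_msqrt (Matrix.posSemidef_conjTranspose_mul_self (M a)))
  have hY2 : Y ^ 2 = Bᴴ * B := by
    rw [sq, hY, key_mul, hBB]
    exact Finset.sum_congr rfl fun a _ => by
      rw [msqrt_mul_self (Matrix.posSemidef_conjTranspose_mul_self (M a))]
  rw [traceNorm_of_sq hYpsd hY2,
    hY, Matrix.trace_sum, Complex.re_sum]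
  refine Finset.sum_congr rfl fun a _ => ?_
  rw [Matrix.trace_kronecker, trace_std, one_mul, traceNorm_eq_msqrt]

end Block

lemma stdkron {K : Type*} [DecidableEq K] (a b : K) :
    Matrix.single a a (1 : ℂ) ⊗ₖ Matrix.single b b (1 : ℂ)
      = Matrix.single (a, b) (a, b) (1 : ℂ) := by
  ext ⟨i, j⟩ ⟨k, l⟩
  by_cases h1 : a = i <;> by_cases h2 : a = k <;> by_cases h3 : b = j <;> by_cases h4 : b = l <;>
    simp [Matrix.single, Matrix.kroneckerMap_apply, Prod.ext_iff, h1, h2, h3, h4] <;>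
    aesop

end QKDAux

open QKDAux Matrix

/-- **Proposition 1 (decomposition of the security parameter), key-length-conditioned form.**
The trace distance between the real state and the ideal state is bounded by the trace
distance between the corresponding Alice–Eve marginals (secrecy part) plus the probability
that Alice's and Bob's keys differ (correctness part). -/
theorem statement0 {K E : Type*} [Fintype K] [DecidableEq K] [Nonempty K]
    [Fintype E] [DecidableEq E] [Nonempty E]
    (q : K × K → ℝ) (hq : ∀ ab, 0 ≤ q ab) (hq1 : ∑ ab, q ab = 1)
    (ρ : K × K → Matrix E E ℂ)
    (hρ : ∀ ab, (ρ ab).PosSemidef) (hρtr : ∀ ab, (ρ ab).trace = 1) :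
    (1 / 2) * traceNorm
        ((∑ ab, (q ab : ℂ) •
            ((Matrix.single ab.1 ab.1 (1 : ℂ) ⊗ₖ Matrix.single ab.2 ab.2 (1 : ℂ))
              ⊗ₖ ρ ab)) -
          (∑ a, (1 / (Fintype.card K : ℂ)) •
            ((Matrix.single a a (1 : ℂ) ⊗ₖ Matrix.single a a (1 : ℂ))
              ⊗ₖ ∑ ab, (q ab : ℂ) • ρ ab)))
      ≤ (1 / 2) * traceNorm
            ((∑ ab, (q ab : ℂ) • (Matrix.single ab.1 ab.1 (1 : ℂ) ⊗ₖ ρ ab)) -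
              (∑ a, (1 / (Fintype.card K : ℂ)) •
                (Matrix.single a a (1 : ℂ) ⊗ₖ ∑ ab, (q ab : ℂ) • ρ ab)))
          + ∑ ab ∈ Finset.univ.filter (fun ab : K × K => ab.1 ≠ ab.2), q ab := by
  classical
  set σc : Matrix E E ℂ := ∑ ab, (q ab : ℂ) • ρ ab with hσc
  have hqC : ∀ ab, (0 : ℂ) ≤ (q ab : ℂ) := fun ab => Complex.zero_le_real.mpr (hq ab)
  have hcK : (0 : ℂ) ≤ 1 / (Fintype.card K : ℂ) := by
    have h : ((1 / (Fintype.card K : ℝ) : ℝ) : ℂ) = 1 / (Fintype.card K : ℂ) := by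
      push_cast; ring
    rw [← h]
    exact Complex.zero_le_real.mpr (by positivity)
  have hσ : σc.PosSemidef := psd_sum _ _ fun ab _ => psd_smul (hqC ab) (hρ ab)
  set M1 : K × K → Matrix E E ℂ :=
    fun p => (q p : ℂ) • ρ p -
      (if p.1 = p.2 then (1 / (Fintype.card K : ℂ)) • σc else 0) with hM1
  set N : K → Matrix E E ℂ :=
    fun a => (∑ b, (q (a, b) : ℂ) • ρ (a, b)) - (1 / (Fintype.card K : ℂ)) • σc with hN
  set Pm : K → Matrix E E ℂ :=
    fun a => ∑ b, if a = b then 0 else (q (a, b) : ℂ) • ρ (a, b) with hPm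
  -- rewrite the LHS matrix as a block-diagonal sum
  have eL : (∑ ab : K × K, (q ab : ℂ) •
        ((Matrix.single ab.1 ab.1 (1 : ℂ) ⊗ₖ Matrix.single ab.2 ab.2 (1 : ℂ))
          ⊗ₖ ρ ab)) -
      (∑ a : K, (1 / (Fintype.card K : ℂ)) •
        ((Matrix.single a a (1 : ℂ) ⊗ₖ Matrix.single a a (1 : ℂ)) ⊗ₖ σc))
      = ∑ p : K × K, Matrix.single p p (1 : ℂ) ⊗ₖ M1 p := by
    have t1 : ∀ ab : K × K, (q ab : ℂ) •
        ((Matrix.single ab.1 ab.1 (1 : ℂ) ⊗ₖ Matrix.single ab.2 ab.2 (1 : ℂ))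
          ⊗ₖ ρ ab) = Matrix.single ab ab (1 : ℂ) ⊗ₖ ((q ab : ℂ) • ρ ab) := by
      intro ab
      rw [stdkron, Matrix.kronecker_smul]
    have t2 : ∀ a : K, (1 / (Fintype.card K : ℂ)) •
        ((Matrix.single a a (1 : ℂ) ⊗ₖ Matrix.single a a (1 : ℂ)) ⊗ₖ σc)
        = Matrix.single (a, a) (a, a) (1 : ℂ) ⊗ₖ ((1 / (Fintype.card K : ℂ)) • σc) := by
      intro a
      rw [stdkron, Matrix.kronecker_smul]
    rw [Finset.sum_congr rfl fun ab _ => t1 ab, Finset.sum_congr rfl fun a _ => t2 a]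
    have t3 : ∑ a : K, Matrix.single ((a, a) : K × K) (a, a) (1 : ℂ)
          ⊗ₖ ((1 / (Fintype.card K : ℂ)) • σc)
        = ∑ p : K × K, Matrix.single p p (1 : ℂ)
          ⊗ₖ (if p.1 = p.2 then (1 / (Fintype.card K : ℂ)) • σc else 0) := by
      rw [Fintype.sum_prod_type]
      refine Finset.sum_congr rfl fun a _ => ?_
      rw [Finset.sum_eq_single a]
      · rw [if_pos rfl]
      · intro b _ hb
        rw [if_neg (fun h => hb h.symm), Matrix.kronecker_zero]
      · simp
    rw [t3, ← Finset.sum_sub_distrib]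
    exact Finset.sum_congr rfl fun p _ => (kron_sub _ _ _).symm
  -- rewrite the RHS matrix as a block-diagonal sum
  have eR : (∑ ab : K × K, (q ab : ℂ) • (Matrix.single ab.1 ab.1 (1 : ℂ) ⊗ₖ ρ ab)) -
      (∑ a : K, (1 / (Fintype.card K : ℂ)) • (Matrix.single a a (1 : ℂ) ⊗ₖ σc))
      = ∑ a : K, Matrix.single a a (1 : ℂ) ⊗ₖ N a := by
    have t1 : (∑ ab : K × K, (q ab : ℂ) • (Matrix.single ab.1 ab.1 (1 : ℂ) ⊗ₖ ρ ab))
        = ∑ a : K, Matrix.single a a (1 : ℂ) ⊗ₖ (∑ b : K, (q (a, b) : ℂ) • ρ (a, b)) := by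
      rw [Fintype.sum_prod_type]
      refine Finset.sum_congr rfl fun a _ => ?_
      refine Eq.trans (Finset.sum_congr rfl fun b _ => ?_) (kron_sum Finset.univ _ _).symm
      rw [Matrix.kronecker_smul]
    have t2 : (∑ a : K, (1 / (Fintype.card K : ℂ)) • (Matrix.single a a (1 : ℂ) ⊗ₖ σc))
        = ∑ a : K, Matrix.single a a (1 : ℂ) ⊗ₖ ((1 / (Fintype.card K : ℂ)) • σc) := by
      refine Finset.sum_congr rfl fun a _ => ?_
      rw [Matrix.kronecker_smul]
    rw [t1, t2, ← Finset.sum_sub_distrib]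
    exact Finset.sum_congr rfl fun a _ => (kron_sub _ _ _).symm
  rw [eL, eR, traceNorm_blockDiag, traceNorm_blockDiag]
  -- split the left sum into diagonal and off-diagonal parts
  rw [← Finset.sum_filter_add_sum_filter_not Finset.univ (fun p : K × K => p.1 = p.2)
    (fun p => traceNorm (M1 p))]
  have hdiag : ∑ p ∈ Finset.univ.filter (fun p : K × K => p.1 = p.2), traceNorm (M1 p)
      = ∑ a, traceNorm (M1 (a, a)) := by
    rw [Finset.sum_filter, Fintype.sum_prod_type]
    refine Finset.sum_congr rfl fun a _ => ?_
    rw [Finset.sum_ite_eq, if_pos (Finset.mem_univ a)]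
  have hoff : ∑ p ∈ Finset.univ.filter (fun p : K × K => ¬ p.1 = p.2), traceNorm (M1 p)
      = ∑ p ∈ Finset.univ.filter (fun p : K × K => ¬ p.1 = p.2), q p := by
    refine Finset.sum_congr rfl fun p hp => ?_
    have hne : ¬ p.1 = p.2 := (Finset.mem_filter.mp hp).2
    have hM : M1 p = (q p : ℂ) • ρ p := by
      simp only [hM1, if_neg hne, sub_zero]
    rw [hM, traceNorm_psd (psd_smul (hqC p) (hρ p)), Matrix.trace_smul, hρtr, smul_eq_mul,
      mul_one, Complex.ofReal_re]
  have hfilters : Finset.univ.filter (fun p : K × K => ¬ p.1 = p.2)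
      = Finset.univ.filter (fun ab : K × K => ab.1 ≠ ab.2) := rfl
  -- per-block bound on the diagonal
  have key_a : ∀ a : K, traceNorm (M1 (a, a))
      ≤ traceNorm (N a) + ∑ b, (if a = b then 0 else q (a, b)) := by
    intro a
    have hNh : (N a).IsHermitian := by
      simp only [hN]
      exact ((psd_sum _ _ fun b _ => psd_smul (hqC _) (hρ _)).1).sub ((psd_smul hcK hσ).1)
    have hPp : (Pm a).PosSemidef := by
      refine psd_sum _ _ fun b _ => ?_
      by_cases h : a = b
      · rw [if_pos h]; exact Matrix.PosSemidef.zero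
      · rw [if_neg h]; exact psd_smul (hqC _) (hρ _)
    have hNP : N a - Pm a = M1 (a, a) := by
      simp only [hN, hPm, hM1, if_true]
      rw [sub_right_comm, ← Finset.sum_sub_distrib]
      congr 1
      have hterm : ∀ b : K, ((q (a, b) : ℂ) • ρ (a, b) -
          if a = b then 0 else (q (a, b) : ℂ) • ρ (a, b))
          = if a = b then (q (a, b) : ℂ) • ρ (a, b) else 0 := by
        intro b; split <;> simp
      rw [Finset.sum_congr rfl fun b _ => hterm b, Finset.sum_ite_eq, if_pos (Finset.mem_univ a)]
    have hb := traceNorm_sub_le hNh hPp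
    rw [hNP] at hb
    have htrP : (Pm a).trace.re = ∑ b, (if a = b then 0 else q (a, b)) := by
      simp only [hPm]
      rw [Matrix.trace_sum, Complex.re_sum]
      refine Finset.sum_congr rfl fun b _ => ?_
      split
      · simp
      · rw [Matrix.trace_smul, hρtr, smul_eq_mul, mul_one, Complex.ofReal_re]
    rwa [htrP] at hb
  have hqoff : ∑ p ∈ Finset.univ.filter (fun p : K × K => ¬ p.1 = p.2), q p
      = ∑ a, ∑ b, (if a = b then 0 else q (a, b)) := by
    rw [Finset.sum_filter, Fintype.sum_prod_type]
    exact Finset.sum_congr rfl fun a _ => Finset.sum_congr rfl fun b _ => ite_not _ _ _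
  have hsum : ∑ a, traceNorm (M1 (a, a)) ≤ (∑ a, traceNorm (N a))
      + ∑ p ∈ Finset.univ.filter (fun p : K × K => ¬ p.1 = p.2), q p := by
    rw [hqoff, ← Finset.sum_add_distrib]
    exact Finset.sum_le_sum fun a _ => key_a a
  rw [hdiag, hoff, ← hfilters]
  linarith
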